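/- Let n, k be positive integers with k < n, and let (s_1,...,s_k) be a uniformly random vector of non-negative integers summing to N. Then the coordinates s_1,...,s_k are negatively associated; in particular, for any subset J ⊆ [k] and t > 0, P(sum_{i ∈ J} s_i ≥ (1+x)·N·|J|/k) satisfies the standard Chernoff-Hoeffding upper bounds that would hold for independent variables with the same marginals. -/

import Mathlib

open Finset

section NAhelpers

variable {k : ℕ}

def TT (X : Finset (Fin k)) (r : ℕ) : Finset (Fin k → ℕ) :=
  (Finset.Nat.antidiagonalTuple k r).filter fun s => ∀ i ∉ X, s i = 0

lemma mem_TT {X : Finset (Fin k)} {r : ℕ} {s : Fin k → ℕ} :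
    s ∈ TT X r ↔ (∀ i ∉ X, s i = 0) ∧ ∑ i ∈ X, s i = r := by
  simp only [TT, mem_filter, Finset.Nat.mem_antidiagonalTuple]
  constructor
  · rintro ⟨hsum, hz⟩
    refine ⟨hz, ?_⟩
    rw [← hsum]
    exact Finset.sum_subset (subset_univ X) (fun i _ hi => hz i hi)
  · rintro ⟨hz, hsum⟩
    refine ⟨?_, hz⟩
    rw [← hsum]
    exact (Finset.sum_subset (subset_univ X) (fun i _ hi => hz i hi)).symm

lemma single_sum {X : Finset (Fin k)} {i : Fin k} (hi : i ∈ X) :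
    ∑ j ∈ X, (Pi.single i 1 : Fin k → ℕ) j = 1 := by
  have h : ∀ j ∈ X, (Pi.single i 1 : Fin k → ℕ) j = if j = i then 1 else 0 := by
    intro j _; rw [Pi.single_apply]
  rw [Finset.sum_congr rfl h, Finset.sum_ite_eq' X i fun _ => (1:ℕ), if_pos hi]

lemma dom_le (X : Finset (Fin k)) (f : (Fin k → ℕ) → ℝ) (hf : Monotone f) (r : ℕ) :
    ((r : ℝ) + X.card) * ∑ u ∈ TT X r, f u
      ≤ ((r : ℝ) + 1) * ∑ u ∈ TT X (r + 1), f u := by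
  have lhs_eq : ((r : ℝ) + X.card) * ∑ u ∈ TT X r, f u
      = ∑ u ∈ TT X r, ∑ i ∈ X, ((u i : ℝ) + 1) * f u := by
    rw [Finset.mul_sum]
    refine Finset.sum_congr rfl fun u hu => ?_
    rw [← Finset.sum_mul]
    congr 1
    have husum := (mem_TT.mp hu).2
    rw [Finset.sum_add_distrib, ← Nat.cast_sum, husum]
    simp
  have rhs_eq : ((r : ℝ) + 1) * ∑ w ∈ TT X (r + 1), f w
      = ∑ w ∈ TT X (r + 1), ∑ i ∈ X, (w i : ℝ) * f w := by
    rw [Finset.mul_sum]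
    refine Finset.sum_congr rfl fun w hw => ?_
    rw [← Finset.sum_mul]
    congr 1
    have hwsum := (mem_TT.mp hw).2
    rw [← Nat.cast_sum, hwsum]
    push_cast
    ring
  rw [lhs_eq, rhs_eq]
  have step1 : ∑ u ∈ TT X r, ∑ i ∈ X, ((u i : ℝ) + 1) * f u
      ≤ ∑ u ∈ TT X r, ∑ i ∈ X, ((u i : ℝ) + 1) * f (u + Pi.single i 1) := by
    refine Finset.sum_le_sum fun u _ => Finset.sum_le_sum fun i _ => ?_
    refine mul_le_mul_of_nonneg_left (hf ?_) (by positivity)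
    exact le_add_of_nonneg_right zero_le
  refine step1.trans_eq ?_
  have prod1 : ∑ u ∈ TT X r, ∑ i ∈ X, ((u i : ℝ) + 1) * f (u + Pi.single i 1)
      = ∑ p ∈ TT X r ×ˢ X, ((p.1 p.2 : ℝ) + 1) * f (p.1 + Pi.single p.2 1) :=
    (Finset.sum_product' (TT X r) X (fun u i => ((u i : ℝ) + 1) * f (u + Pi.single i 1))).symm
  have prod2 : ∑ w ∈ TT X (r + 1), ∑ i ∈ X, (w i : ℝ) * f w
      = ∑ p ∈ TT X (r + 1) ×ˢ X, ((p.1 p.2 : ℝ)) * f p.1 :=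
    (Finset.sum_product' (TT X (r + 1)) X (fun w i => ((w i : ℝ)) * f w)).symm
  rw [prod1, prod2]
  conv_rhs => rw [← Finset.sum_filter_of_ne (p := fun p : (Fin k → ℕ) × Fin k => p.1 p.2 ≠ 0)
    (by intro p _ hne h0; exact hne (by rw [h0]; simp))]
  refine Finset.sum_nbij' (i := fun p => (p.1 + Pi.single p.2 1, p.2))
    (j := fun p => (p.1 - Pi.single p.2 1, p.2)) ?_ ?_ ?_ ?_ ?_
  · rintro ⟨u, i⟩ hp
    simp only [Finset.mem_product, mem_TT] at hp
    obtain ⟨⟨huz, husum⟩, hiX⟩ := hp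
    simp only [Finset.mem_filter, Finset.mem_product, mem_TT]
    refine ⟨⟨⟨fun j hj => ?_, ?_⟩, hiX⟩, ?_⟩
    · have : j ≠ i := fun h => hj (h ▸ hiX)
      simp [huz j hj, Pi.single_apply, this]
    · simp only [Pi.add_apply]
      rw [Finset.sum_add_distrib, husum, single_sum hiX]
    · simp
  · rintro ⟨w, i⟩ hp
    simp only [Finset.mem_filter, Finset.mem_product, mem_TT] at hp
    obtain ⟨⟨⟨hwz, hwsum⟩, hiX⟩, hwi⟩ := hp
    simp only [Finset.mem_product, mem_TT]
    have hle : ∀ j ∈ X, (Pi.single i 1 : Fin k → ℕ) j ≤ w j := by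
      intro j _
      rw [Pi.single_apply]
      show (if j = i then 1 else 0) ≤ w j
      split
      · next h => subst h; omega
      · exact zero_le
    refine ⟨⟨fun j hj => ?_, ?_⟩, hiX⟩
    · have : j ≠ i := fun h => hj (h ▸ hiX)
      simp [Pi.sub_apply, hwz j hj, Pi.single_apply, this]
    · have : ∑ j ∈ X, (w j - (Pi.single i 1 : Fin k → ℕ) j)
          = ∑ j ∈ X, w j - ∑ j ∈ X, (Pi.single i 1 : Fin k → ℕ) j :=
        Finset.sum_tsub_distrib X hle
      rw [show (w - Pi.single i 1 : Fin k → ℕ) = fun j => w j - (Pi.single i 1 : Fin k → ℕ) j from rfl]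
      rw [this, hwsum, single_sum hiX]
      omega
  · rintro ⟨u, i⟩ _
    simp only [Prod.mk.injEq]
    refine ⟨funext fun j => ?_, trivial⟩
    simp [Pi.sub_apply, Pi.add_apply]
  · rintro ⟨w, i⟩ hp
    simp only [Finset.mem_filter, Finset.mem_product, mem_TT] at hp
    obtain ⟨⟨⟨hwz, hwsum⟩, hiX⟩, hwi⟩ := hp
    simp only [Prod.mk.injEq]
    refine ⟨funext fun j => ?_, trivial⟩
    simp only [Pi.add_apply, Pi.sub_apply, Pi.single_apply]
    split
    · next h => subst h; omega
    · omega
  · rintro ⟨u, i⟩ _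
    simp

lemma TT_card_pos {X : Finset (Fin k)} (hX : X.Nonempty) (r : ℕ) :
    0 < (TT X r).card := by
  obtain ⟨i₀, hi₀⟩ := hX
  refine Finset.card_pos.mpr ⟨fun i => if i = i₀ then r else 0, ?_⟩
  rw [mem_TT]
  constructor
  · intro i hi
    have : i ≠ i₀ := fun h => hi (h ▸ hi₀)
    simp [this]
  · simp [Finset.sum_ite_eq' X i₀ fun _ => r, hi₀]

lemma dom_eq (X : Finset (Fin k)) (r : ℕ) :
    ((r : ℝ) + X.card) * ((TT X r).card : ℝ) = ((r : ℝ) + 1) * ((TT X (r + 1)).card : ℝ) := by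
  have h1 := dom_le X (fun _ => (1:ℝ)) monotone_const r
  have h2 := dom_le X (fun _ => (-1:ℝ)) monotone_const r
  simp only [Finset.sum_const, nsmul_eq_mul, mul_one, mul_neg] at h1 h2
  linarith

lemma ratio_mono (X : Finset (Fin k)) (hX : X.Nonempty) (f : (Fin k → ℕ) → ℝ)
    (hf : Monotone f) :
    Monotone fun r => (∑ u ∈ TT X r, f u) / ((TT X r).card : ℝ) := by
  refine monotone_nat_of_le_succ fun r => ?_
  have hM0 : (0:ℝ) < ((TT X r).card : ℝ) := by exact_mod_cast TT_card_pos hX r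
  have hM1 : (0:ℝ) < ((TT X (r + 1)).card : ℝ) := by exact_mod_cast TT_card_pos hX (r + 1)
  rw [div_le_div_iff₀ hM0 hM1]
  have h1 := dom_le X f hf r
  have h2 := dom_eq X r
  have hr1 : (0:ℝ) < (r:ℝ) + 1 := by positivity
  have key := mul_le_mul_of_nonneg_right h1 hM0.le
  have lhs' : (((r:ℝ) + X.card) * ∑ u ∈ TT X r, f u) * ((TT X r).card : ℝ)
      = ((r:ℝ) + 1) * ((∑ u ∈ TT X r, f u) * ((TT X (r + 1)).card : ℝ)) := by
    calc (((r:ℝ) + X.card) * ∑ u ∈ TT X r, f u) * ((TT X r).card : ℝ)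
        = (∑ u ∈ TT X r, f u) * (((r:ℝ) + X.card) * ((TT X r).card : ℝ)) := by ring
      _ = (∑ u ∈ TT X r, f u) * (((r:ℝ) + 1) * ((TT X (r + 1)).card : ℝ)) := by rw [h2]
      _ = ((r:ℝ) + 1) * ((∑ u ∈ TT X r, f u) * ((TT X (r + 1)).card : ℝ)) := by ring
  have rhs' : (((r:ℝ) + 1) * ∑ u ∈ TT X (r + 1), f u) * ((TT X r).card : ℝ)
      = ((r:ℝ) + 1) * ((∑ u ∈ TT X (r + 1), f u) * ((TT X r).card : ℝ)) := by ring
  rw [lhs', rhs'] at key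
  exact le_of_mul_le_mul_left key hr1

lemma cheb {s : Finset ℕ} {w p q : ℕ → ℝ} (hw : ∀ a ∈ s, 0 ≤ w a)
    (hpq : ∀ a ∈ s, ∀ b ∈ s, 0 ≤ (p b - p a) * (q a - q b)) :
    (∑ a ∈ s, w a) * (∑ a ∈ s, w a * (p a * q a))
      ≤ (∑ a ∈ s, w a * p a) * (∑ a ∈ s, w a * q a) := by
  have key : 0 ≤ ∑ a ∈ s, ∑ b ∈ s, (w a * w b) * ((p b - p a) * (q a - q b)) :=
    Finset.sum_nonneg fun a ha => Finset.sum_nonneg fun b hb =>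
      mul_nonneg (mul_nonneg (hw a ha) (hw b hb)) (hpq a ha b hb)
  have expand : ∑ a ∈ s, ∑ b ∈ s, (w a * w b) * ((p b - p a) * (q a - q b))
      = (∑ a ∈ s, w a * q a) * (∑ a ∈ s, w a * p a)
        - (∑ a ∈ s, w a) * (∑ a ∈ s, w a * (p a * q a))
        - (∑ a ∈ s, w a * (p a * q a)) * (∑ a ∈ s, w a)
        + (∑ a ∈ s, w a * p a) * (∑ a ∈ s, w a * q a) := by
    rw [Finset.sum_mul_sum, Finset.sum_mul_sum, Finset.sum_mul_sum, Finset.sum_mul_sum]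
    rw [← Finset.sum_sub_distrib, ← Finset.sum_sub_distrib, ← Finset.sum_add_distrib]
    refine Finset.sum_congr rfl fun a _ => ?_
    rw [← Finset.sum_sub_distrib, ← Finset.sum_sub_distrib, ← Finset.sum_add_distrib]
    exact Finset.sum_congr rfl fun b _ => by ring
  rw [expand] at key
  linarith

lemma sum_TT_split (A : Finset (Fin k)) (N : ℕ) (h : (Fin k → ℕ) → ℝ) :
    ∑ s ∈ TT Finset.univ N, h s =
      ∑ a ∈ Finset.range (N+1), ∑ u ∈ TT A a, ∑ v ∈ TT Aᶜ (N - a), h (u + v) := by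
  rw [show (∑ a ∈ Finset.range (N+1), ∑ u ∈ TT A a, ∑ v ∈ TT Aᶜ (N - a), h (u + v))
      = ∑ p ∈ (Finset.range (N+1)).sigma (fun a => TT A a ×ˢ TT Aᶜ (N - a)),
          h (p.2.1 + p.2.2) by
    rw [Finset.sum_sigma]
    refine Finset.sum_congr rfl fun a _ => ?_
    exact (Finset.sum_product (f := fun p => h (p.1 + p.2)) ..).symm]
  refine Finset.sum_nbij'
    (i := fun s => ⟨∑ i ∈ A, s i,
      (fun i => if i ∈ A then s i else 0, fun i => if i ∈ A then 0 else s i)⟩)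
    (j := fun p => p.2.1 + p.2.2) ?_ ?_ ?_ ?_ ?_
  · intro s hs
    rw [mem_TT] at hs
    obtain ⟨-, hsum⟩ := hs
    have hle : ∑ i ∈ A, s i ≤ N := by
      rw [← hsum]
      exact Finset.sum_le_sum_of_subset (subset_univ A)
    simp only [Finset.mem_sigma, Finset.mem_range, Finset.mem_product, mem_TT]
    refine ⟨Nat.lt_succ_of_le hle, ⟨fun i hi => by simp [hi], ?_⟩,
      fun i hi => by simp [show i ∈ A by simpa using hi], ?_⟩
    · exact Finset.sum_congr rfl fun i hi => by simp [hi]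
    · have : ∑ i ∈ Aᶜ, (if i ∈ A then 0 else s i) = ∑ i ∈ Aᶜ, s i := by
        refine Finset.sum_congr rfl fun i hi => ?_
        simp [Finset.mem_compl.mp hi]
      rw [this]
      have htot := Finset.sum_add_sum_compl A s
      rw [hsum] at htot
      omega
  · rintro ⟨a, u, v⟩ hp
    simp only [Finset.mem_sigma, Finset.mem_range, Finset.mem_product, mem_TT] at hp
    obtain ⟨ha, ⟨huz, husum⟩, hvz, hvsum⟩ := hp
    rw [mem_TT]
    refine ⟨fun i hi => absurd (Finset.mem_univ i) hi, ?_⟩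
    have h1 : ∑ i ∈ Finset.univ, (u + v) i = ∑ i : Fin k, u i + ∑ i : Fin k, v i := by
      simp [Finset.sum_add_distrib]
    have h2 : ∑ i : Fin k, u i = a := by
      rw [← Finset.sum_add_sum_compl A u, husum]
      have : ∑ i ∈ Aᶜ, u i = 0 :=
        Finset.sum_eq_zero fun i hi => huz i (Finset.mem_compl.mp hi)
      omega
    have h3 : ∑ i : Fin k, v i = N - a := by
      rw [← Finset.sum_add_sum_compl A v, hvsum]
      have : ∑ i ∈ A, v i = 0 :=
        Finset.sum_eq_zero fun i hi => hvz i (by simp [hi])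
      omega
    rw [h1, h2, h3]
    omega
  · intro s _
    funext i
    simp only [Pi.add_apply]
    by_cases hi : i ∈ A <;> simp [hi]
  · rintro ⟨a, u, v⟩ hp
    simp only [Finset.mem_sigma, Finset.mem_range, Finset.mem_product, mem_TT] at hp
    obtain ⟨ha, ⟨huz, husum⟩, hvz, hvsum⟩ := hp
    have hva : ∀ i ∈ A, v i = 0 := fun i hi => hvz i (by simp [hi])
    have hsum : ∑ i ∈ A, (u + v) i = a := by
      rw [← husum]
      refine Finset.sum_congr rfl fun i hi => ?_
      simp [Pi.add_apply, hva i hi]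
    have h2 : (fun i => if i ∈ A then (u + v) i else 0) = u := by
      funext i
      by_cases hi : i ∈ A
      · simp [hi, hva i hi]
      · simp [hi, huz i hi]
    have h3 : (fun i => if i ∈ A then 0 else (u + v) i) = v := by
      funext i
      by_cases hi : i ∈ A
      · simp [hi, hva i hi, huz]
      · simp [hi, huz i hi]
    subst hsum
    show (⟨∑ i ∈ A, (u + v) i, ((fun i => if i ∈ A then (u + v) i else 0),
        (fun i => if i ∈ A then 0 else (u + v) i))⟩ :
        Σ _ : ℕ, (Fin k → ℕ) × (Fin k → ℕ)) = _
    exact congrArg (fun z => Sigma.mk (∑ i ∈ A, (u + v) i) z) (by rw [Prod.mk.injEq]; exact ⟨h2, h3⟩)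
  · intro s _
    refine congrArg h (funext fun i => ?_)
    simp only [Pi.add_apply]
    by_cases hi : i ∈ A <;> simp [hi]

end NAhelpers

/-- Negative association for a uniformly random composition (Proposition 5 of
Dubhashi–Ranjan): if `(s_1,…,s_k)` is uniform on the vectors of non-negative
integers summing to `N` (here `D` is the set of such vectors), then for
disjoint index sets `A, B` and non-decreasing functions `f, g` depending only
on the coordinates in `A` resp. `B`, `E[f·g] ≤ E[f]·E[g]`; in particular the
Chernoff–Hoeffding exponential-moment bound
`E[exp(λ ∑_{i∈J} s_i)] ≤ ∏_{i∈J} E[exp(λ s_i)]` holds for any `J` and `λ ≥ 0`,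
as it would for independent variables with the same marginals. -/
theorem stmt17 (n k N : ℕ) (hk : 0 < k) (hkn : k < n)
    (D : Finset (Fin k → ℕ)) (hD : ∀ s, s ∈ D ↔ ∑ i, s i = N) :
    (∀ (A B : Finset (Fin k)), Disjoint A B →
      ∀ f g : (Fin k → ℕ) → ℝ, Monotone f → Monotone g →
        (∀ s t : Fin k → ℕ, (∀ i ∈ A, s i = t i) → f s = f t) →
        (∀ s t : Fin k → ℕ, (∀ i ∈ B, s i = t i) → g s = g t) →
        (∑ s ∈ D, f s * g s) / (D.card : ℝ)
          ≤ ((∑ s ∈ D, f s) / (D.card : ℝ)) * ((∑ s ∈ D, g s) / (D.card : ℝ))) ∧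
    ∀ (J : Finset (Fin k)) (lam : ℝ), 0 ≤ lam →
      (∑ s ∈ D, Real.exp (lam * ∑ i ∈ J, (s i : ℝ))) / (D.card : ℝ)
        ≤ ∏ i ∈ J, (∑ s ∈ D, Real.exp (lam * (s i : ℝ))) / (D.card : ℝ) := by
  have : Nonempty (Fin k) := ⟨⟨0, hk⟩⟩
  have hDT : D = TT Finset.univ N := by
    ext s
    rw [hD, mem_TT]
    simp
  have hcpos : (0:ℝ) < (D.card : ℝ) := by
    rw [hDT]
    exact_mod_cast TT_card_pos Finset.univ_nonempty N
  set c : ℝ := (D.card : ℝ) with hc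
  have na : ∀ (A B : Finset (Fin k)), Disjoint A B →
      ∀ f g : (Fin k → ℕ) → ℝ, Monotone f → Monotone g →
        (∀ s t : Fin k → ℕ, (∀ i ∈ A, s i = t i) → f s = f t) →
        (∀ s t : Fin k → ℕ, (∀ i ∈ B, s i = t i) → g s = g t) →
        (∑ s ∈ D, f s * g s) / c
          ≤ ((∑ s ∈ D, f s) / c) * ((∑ s ∈ D, g s) / c) := by
    intro A B hAB f g hf hg hfA hgB
    by_cases hBe : B = ∅
    · have hgc : ∀ s, g s = g 0 := fun s => hgB s 0 (fun i hi => by simp [hBe] at hi)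
      have h1 : ∑ s ∈ D, f s * g s = (∑ s ∈ D, f s) * g 0 := by
        rw [Finset.sum_mul]
        exact Finset.sum_congr rfl fun s _ => by rw [hgc s]
      have h2 : ∑ s ∈ D, g s = c * g 0 := by
        rw [hc]
        rw [show ∑ s ∈ D, g s = ∑ s ∈ D, g 0 from Finset.sum_congr rfl fun s _ => hgc s]
        simp [mul_comm]
      rw [h1, h2]
      refine le_of_eq ?_
      field_simp
      try ring
    by_cases hAe : A = ∅
    · have hfc : ∀ s, f s = f 0 := fun s => hfA s 0 (fun i hi => by simp [hAe] at hi)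
      have h1 : ∑ s ∈ D, f s * g s = f 0 * ∑ s ∈ D, g s := by
        rw [Finset.mul_sum]
        exact Finset.sum_congr rfl fun s _ => by rw [hfc s]
      have h2 : ∑ s ∈ D, f s = c * f 0 := by
        rw [hc]
        rw [show ∑ s ∈ D, f s = ∑ s ∈ D, f 0 from Finset.sum_congr rfl fun s _ => hfc s]
        simp [mul_comm]
      rw [h1, h2]
      refine le_of_eq ?_
      field_simp
      try ring
    have hAne : A.Nonempty := Finset.nonempty_iff_ne_empty.mpr hAe
    have hBne : B.Nonempty := Finset.nonempty_iff_ne_empty.mpr hBe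
    have hBsub : B ⊆ Aᶜ := fun i hi =>
      Finset.mem_compl.mpr (Finset.disjoint_right.mp hAB hi)
    have hAcne : Aᶜ.Nonempty := hBne.mono hBsub
    set Φ : ℕ → ℝ := fun a => ∑ u ∈ TT A a, f u with hΦ
    set Ψ : ℕ → ℝ := fun r => ∑ v ∈ TT Aᶜ r, g v with hΨ
    set MA : ℕ → ℝ := fun a => ((TT A a).card : ℝ) with hMA
    set MC : ℕ → ℝ := fun r => ((TT (Aᶜ : Finset (Fin k)) r).card : ℝ) with hMC
    have hfu : ∀ a, ∀ u ∈ TT A a, ∀ v ∈ TT (Aᶜ : Finset (Fin k)) (N - a), f (u + v) = f u := by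
      intro a u hu v hv
      refine hfA (u + v) u fun i hi => ?_
      have hv0 : v i = 0 := (mem_TT.mp hv).1 i (by simp [hi])
      simp [hv0]
    have hgv : ∀ a, ∀ u ∈ TT A a, ∀ v ∈ TT (Aᶜ : Finset (Fin k)) (N - a), g (u + v) = g v := by
      intro a u hu v hv
      refine hgB (u + v) v fun i hi => ?_
      have hu0 : u i = 0 := (mem_TT.mp hu).1 i (Finset.disjoint_right.mp hAB hi)
      simp [hu0]
    have S1 : ∑ s ∈ D, f s * g s = ∑ a ∈ Finset.range (N+1), Φ a * Ψ (N - a) := by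
      rw [hDT, sum_TT_split A N (fun s => f s * g s)]
      refine Finset.sum_congr rfl fun a _ => ?_
      rw [hΦ, hΨ, Finset.sum_mul_sum]
      refine Finset.sum_congr rfl fun u hu => Finset.sum_congr rfl fun v hv => ?_
      rw [hfu a u hu v hv, hgv a u hu v hv]
    have S2 : ∑ s ∈ D, f s = ∑ a ∈ Finset.range (N+1), Φ a * MC (N - a) := by
      rw [hDT, sum_TT_split A N f]
      refine Finset.sum_congr rfl fun a _ => ?_
      calc ∑ u ∈ TT A a, ∑ v ∈ TT (Aᶜ : Finset (Fin k)) (N - a), f (u + v)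
          = ∑ u ∈ TT A a, ∑ v ∈ TT (Aᶜ : Finset (Fin k)) (N - a), f u :=
            Finset.sum_congr rfl fun u hu => Finset.sum_congr rfl fun v hv => hfu a u hu v hv
        _ = ∑ u ∈ TT A a, MC (N - a) * f u := by
            refine Finset.sum_congr rfl fun u _ => ?_
            rw [Finset.sum_const, nsmul_eq_mul, hMC]
        _ = Φ a * MC (N - a) := by rw [← Finset.mul_sum, hΦ, mul_comm]
    have S3 : ∑ s ∈ D, g s = ∑ a ∈ Finset.range (N+1), MA a * Ψ (N - a) := by
      rw [hDT, sum_TT_split A N g]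
      refine Finset.sum_congr rfl fun a _ => ?_
      calc ∑ u ∈ TT A a, ∑ v ∈ TT (Aᶜ : Finset (Fin k)) (N - a), g (u + v)
          = ∑ u ∈ TT A a, ∑ v ∈ TT (Aᶜ : Finset (Fin k)) (N - a), g v :=
            Finset.sum_congr rfl fun u hu => Finset.sum_congr rfl fun v hv => hgv a u hu v hv
        _ = ∑ u ∈ TT A a, Ψ (N - a) := Finset.sum_congr rfl fun u _ => rfl
        _ = MA a * Ψ (N - a) := by rw [Finset.sum_const, nsmul_eq_mul, hMA]
    have S4 : c = ∑ a ∈ Finset.range (N+1), MA a * MC (N - a) := by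
      have hsplit := sum_TT_split A N (fun _ => (1:ℝ))
      have hL : ∑ _s ∈ TT (Finset.univ : Finset (Fin k)) N, (1:ℝ) = c := by
        rw [Finset.sum_const, nsmul_eq_mul, mul_one, hc, hDT]
      rw [hL] at hsplit
      rw [hsplit]
      refine Finset.sum_congr rfl fun a _ => ?_
      calc ∑ u ∈ TT A a, ∑ _v ∈ TT (Aᶜ : Finset (Fin k)) (N - a), (1:ℝ)
          = ∑ _u ∈ TT A a, MC (N - a) := by
            refine Finset.sum_congr rfl fun u _ => ?_
            rw [Finset.sum_const, nsmul_eq_mul, mul_one, hMC]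
        _ = MA a * MC (N - a) := by rw [Finset.sum_const, nsmul_eq_mul, hMA]
    set w : ℕ → ℝ := fun a => MA a * MC (N - a) with hw
    set p : ℕ → ℝ := fun a => Φ a / MA a with hp
    set q : ℕ → ℝ := fun a => Ψ (N - a) / MC (N - a) with hq
    have hMApos : ∀ a, 0 < MA a := fun a => by
      simp only [hMA]
      exact_mod_cast TT_card_pos hAne a
    have hMCpos : ∀ r, 0 < MC r := fun r => by
      simp only [hMC]
      exact_mod_cast TT_card_pos hAcne r
    have hwp : ∀ a, w a * p a = Φ a * MC (N - a) := by
      intro a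
      have ha := (hMApos a).ne'
      simp only [hw, hp]
      field_simp
      try ring
    have hwq : ∀ a, w a * q a = MA a * Ψ (N - a) := by
      intro a
      have hb := (hMCpos (N - a)).ne'
      simp only [hw, hq]
      field_simp
      try ring
    have hwpq : ∀ a, w a * (p a * q a) = Φ a * Ψ (N - a) := by
      intro a
      have ha := (hMApos a).ne'
      have hb := (hMCpos (N - a)).ne'
      simp only [hw, hp, hq]
      field_simp
      try ring
    have hpm : Monotone p := by
      simp only [hp, hΦ, hMA]
      exact ratio_mono A hAne f hf
    have hRmono := ratio_mono (Aᶜ : Finset (Fin k)) hAcne g hg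
    have hqm : ∀ a b : ℕ, a ≤ b → q b ≤ q a := by
      intro a b hab
      simp only [hq, hΨ, hMC]
      exact hRmono (Nat.sub_le_sub_left hab N)
    have key := cheb (s := Finset.range (N+1)) (w := w) (p := p) (q := q)
      (fun a _ => le_of_lt (by
        simp only [hw]
        exact mul_pos (hMApos a) (hMCpos (N - a))))
      (by
        intro a _ b _
        rcases le_total a b with hab | hab
        · exact mul_nonneg (by linarith [hpm hab]) (by linarith [hqm a b hab])
        · nlinarith [hpm hab, hqm b a hab])
    have e1 : ∑ a ∈ Finset.range (N+1), w a * (p a * q a) = ∑ s ∈ D, f s * g s := by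
      rw [S1]; exact Finset.sum_congr rfl fun a _ => hwpq a
    have e2 : ∑ a ∈ Finset.range (N+1), w a * p a = ∑ s ∈ D, f s := by
      rw [S2]; exact Finset.sum_congr rfl fun a _ => hwp a
    have e3 : ∑ a ∈ Finset.range (N+1), w a * q a = ∑ s ∈ D, g s := by
      rw [S3]; exact Finset.sum_congr rfl fun a _ => hwq a
    have e4 : ∑ a ∈ Finset.range (N+1), w a = c := S4.symm
    rw [e1, e2, e3, e4] at key
    rw [div_mul_div_comm, div_le_div_iff₀ hcpos (by positivity)]
    calc (∑ s ∈ D, f s * g s) * (c * c) = (c * ∑ s ∈ D, f s * g s) * c := by ring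
      _ ≤ ((∑ s ∈ D, f s) * (∑ s ∈ D, g s)) * c := mul_le_mul_of_nonneg_right key hcpos.le
  refine ⟨na, ?_⟩
  intro J lam hlam
  induction J using Finset.cons_induction with
  | empty =>
    simp only [Finset.sum_empty, mul_zero, Real.exp_zero, Finset.prod_empty]
    rw [Finset.sum_const, nsmul_eq_mul, mul_one, div_self hcpos.ne']
  | cons j J' hj ih =>
    have hsplitexp : ∀ s : Fin k → ℕ,
        Real.exp (lam * ∑ i ∈ Finset.cons j J' hj, (s i : ℝ))
          = Real.exp (lam * (s j : ℝ)) * Real.exp (lam * ∑ i ∈ J', (s i : ℝ)) := by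
      intro s
      rw [Finset.sum_cons, mul_add, Real.exp_add]
    have hfmono : Monotone fun s : Fin k → ℕ => Real.exp (lam * (s j : ℝ)) := by
      intro s t hst
      exact Real.exp_le_exp.mpr (mul_le_mul_of_nonneg_left (by exact_mod_cast hst j) hlam)
    have hgmono : Monotone fun s : Fin k → ℕ => Real.exp (lam * ∑ i ∈ J', (s i : ℝ)) := by
      intro s t hst
      refine Real.exp_le_exp.mpr (mul_le_mul_of_nonneg_left ?_ hlam)
      exact Finset.sum_le_sum fun i _ => by exact_mod_cast hst i
    have step := na {j} J' (Finset.disjoint_singleton_left.mpr hj)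
      (fun s => Real.exp (lam * (s j : ℝ)))
      (fun s => Real.exp (lam * ∑ i ∈ J', (s i : ℝ)))
      hfmono hgmono
      (fun s t hst => by
        have hj' := hst j (Finset.mem_singleton_self j)
        simp only [hj'])
      (fun s t hst => by
        have hsum : ∑ i ∈ J', ((s i : ℝ)) = ∑ i ∈ J', ((t i : ℝ)) :=
          Finset.sum_congr rfl fun i hi => by rw [hst i hi]
        simp only [hsum])
    have LHSeq : ∑ s ∈ D, Real.exp (lam * ∑ i ∈ Finset.cons j J' hj, (s i : ℝ))
        = ∑ s ∈ D, Real.exp (lam * (s j : ℝ)) * Real.exp (lam * ∑ i ∈ J', (s i : ℝ)) :=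
      Finset.sum_congr rfl fun s _ => hsplitexp s
    rw [LHSeq, Finset.prod_cons]
    refine step.trans ?_
    refine mul_le_mul_of_nonneg_left ih ?_
    exact div_nonneg (Finset.sum_nonneg fun s _ => (Real.exp_pos _).le) hcpos.le
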